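/- arXiv:2602.10786 — 2 statements merged into one kernel-verified Lean document; each statement's English description precedes it below -/
import Mathlib

section
/- Let D = P⁻¹(S + B/2) be an SBP operator, where P is symmetric positive definite, S is skew-symmetric, and B = e_R e_Rᵀ − e_L e_Lᵀ with e_L, e_R the first and last standard basis vectors of ℝ^N. Assume D𝟙 = 0. Then D is nullspace consistent (nul(D) = span{𝟙}) if and only if there exists ν ≠ 0 such that the matrix D̃ = D + ν P⁻¹ e_L e_Lᵀ is invertible. -/
open Matrix

lemma vecMulVec_mulVec_aux {m : Type*} [Fintype m] (u v x : m → ℝ) :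
    (vecMulVec u v).mulVec x = (v ⬝ᵥ x) • u := by
  ext i
  simp only [mulVec, dotProduct, vecMulVec_apply, Pi.smul_apply, smul_eq_mul, Finset.sum_mul]
  exact Finset.sum_congr rfl fun j _ => by ring

lemma skew_quad_aux {m : Type*} [Fintype m] {S : Matrix m m ℝ} (hS : Sᵀ = -S)
    (x : m → ℝ) : x ⬝ᵥ S.mulVec x = 0 := by
  have h1 : x ⬝ᵥ S.mulVec x = (Sᵀ.mulVec x) ⬝ᵥ x := by
    rw [dotProduct_mulVec, mulVec_transpose]
  rw [hS, neg_mulVec, neg_dotProduct] at h1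
  have h2 : (S.mulVec x) ⬝ᵥ x = x ⬝ᵥ S.mulVec x := dotProduct_comm _ _
  linarith

/-- For an SBP operator `D = P⁻¹ (S + B/2)` with `P` symmetric positive definite,
`S` skew-symmetric, `B = e_R e_Rᵀ - e_L e_Lᵀ`, and `D 𝟙 = 0`, nullspace consistency
(`nul D = span {𝟙}`) holds iff `D̃ = D + ν P⁻¹ e_L e_Lᵀ` is invertible for some `ν ≠ 0`. -/
theorem stmt_1 (n : ℕ) (P S : Matrix (Fin (n + 1)) (Fin (n + 1)) ℝ)
    (hP : P.PosDef) (hPsymm : P.IsSymm) (hS : Sᵀ = -S)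
    (eL eR : Fin (n + 1) → ℝ) (heL : eL = Pi.single 0 1) (heR : eR = Pi.single (Fin.last n) 1)
    (B D : Matrix (Fin (n + 1)) (Fin (n + 1)) ℝ)
    (hB : B = vecMulVec eR eR - vecMulVec eL eL)
    (hD : D = P⁻¹ * (S + (1 / 2 : ℝ) • B))
    (hconsistent : D.mulVec (fun _ => 1) = 0) :
    LinearMap.ker D.mulVecLin = Submodule.span ℝ {(fun _ => 1 : Fin (n + 1) → ℝ)} ↔
      ∃ ν : ℝ, ν ≠ 0 ∧ IsUnit (D + ν • (P⁻¹ * vecMulVec eL eL)) := by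
  set one : Fin (n + 1) → ℝ := fun _ => 1 with hone
  set A : Matrix (Fin (n + 1)) (Fin (n + 1)) ℝ := S + (1 / 2 : ℝ) • B with hA
  set E : Matrix (Fin (n + 1)) (Fin (n + 1)) ℝ := vecMulVec eL eL with hE
  -- invertibility of P and P⁻¹
  have hPdet : IsUnit P.det := isUnit_iff_ne_zero.mpr (ne_of_gt hP.det_pos)
  have hPunit : IsUnit P := (isUnit_iff_isUnit_det P).mpr hPdet
  have hPinvUnit : IsUnit P⁻¹ := isUnit_nonsing_inv_iff.mpr hPunit
  have hPinvInj : Function.Injective (P⁻¹).mulVec :=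
    mulVec_injective_iff_isUnit.mpr hPinvUnit
  -- basic mulVec computations
  have hEx : ∀ x : Fin (n + 1) → ℝ, E.mulVec x = (x 0) • eL := by
    intro x
    rw [hE, vecMulVec_mulVec_aux, heL, single_dotProduct, one_mul]
  have hBx : ∀ x : Fin (n + 1) → ℝ,
      B.mulVec x = (x (Fin.last n)) • eR - (x 0) • eL := by
    intro x
    rw [hB, sub_mulVec, vecMulVec_mulVec_aux, vecMulVec_mulVec_aux, heL, heR,
      single_dotProduct, single_dotProduct, one_mul, one_mul]
  -- dot products with basis vectors
  have hdotL : ∀ x : Fin (n + 1) → ℝ, x ⬝ᵥ eL = x 0 := by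
    intro x; rw [heL, dotProduct_single, mul_one]
  have hdotR : ∀ x : Fin (n + 1) → ℝ, x ⬝ᵥ eR = x (Fin.last n) := by
    intro x; rw [heR, dotProduct_single, mul_one]
  -- A 𝟙 = 0
  have hDone : D.mulVec one = P⁻¹.mulVec (A.mulVec one) := by
    rw [hD, ← mulVec_mulVec]
  have hAone : A.mulVec one = 0 := by
    apply hPinvInj
    rw [← hDone, hconsistent, mulVec_zero]
  -- kernels of D and A coincide
  have hkerD : LinearMap.ker D.mulVecLin = LinearMap.ker A.mulVecLin := by
    ext x
    simp only [LinearMap.mem_ker, mulVecLin_apply]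
    constructor
    · intro hx
      apply hPinvInj
      rw [mulVec_zero]
      rw [hD, ← mulVec_mulVec] at hx
      exact hx
    · intro hx
      rw [hD, ← mulVec_mulVec, hx, mulVec_zero]
  -- rewriting the perturbed matrix
  have hPert : ∀ ν : ℝ, D + ν • (P⁻¹ * E) = P⁻¹ * (A + ν • E) := by
    intro ν
    simp only [hD, hA, mul_add, mul_smul_comm]
  have hPertUnit : ∀ ν : ℝ, IsUnit (D + ν • (P⁻¹ * E)) ↔ IsUnit (A + ν • E) := by
    intro ν
    rw [hPert ν, isUnit_iff_isUnit_det, det_mul, IsUnit.mul_iff,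
      isUnit_iff_isUnit_det (A + ν • E)]
    refine ⟨fun h => h.2, fun h => ⟨isUnit_nonsing_inv_det P hPdet, h⟩⟩
  constructor
  · -- nullspace consistency → perturbed matrix invertible (with ν = 1)
    intro hker
    refine ⟨1, one_ne_zero, ?_⟩
    rw [hPertUnit 1]
    rw [← mulVec_injective_iff_isUnit]
    rw [hkerD] at hker
    have hinj : ∀ x : Fin (n + 1) → ℝ, (A + (1 : ℝ) • E).mulVec x = 0 → x = 0 := by
      intro x hx
      set x0 := x 0 with hx0
      set xN := x (Fin.last n) with hxN
      have hMx : A.mulVec x + (x0 • eL) = 0 := by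
        rw [add_mulVec, one_smul, hEx] at hx
        exact hx
      -- quadratic form equation
      have hq : x ⬝ᵥ (A.mulVec x + x0 • eL) = 0 := by rw [hMx, dotProduct_zero]
      have hxSx : x ⬝ᵥ S.mulVec x = 0 := skew_quad_aux hS x
      have hxBx : x ⬝ᵥ B.mulVec x = xN * xN - x0 * x0 := by
        rw [hBx, dotProduct_sub, dotProduct_smul, dotProduct_smul, hdotL, hdotR,
          smul_eq_mul, smul_eq_mul]
      have hq1 : (1 / 2 : ℝ) * (xN * xN - x0 * x0) + x0 * x0 = 0 := by
        rw [hA, add_mulVec, smul_mulVec, dotProduct_add, dotProduct_add,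
          dotProduct_smul, dotProduct_smul, hxSx, hxBx, hdotL] at hq
        simpa [smul_eq_mul] using hq
      -- pairing with 𝟙
      have hSone : S.mulVec one = -((1 / 2 : ℝ) • (eR - eL)) := by
        have h1 : B.mulVec one = eR - eL := by
          rw [hBx]; simp [hone]
        have h2 := hAone
        rw [hA, add_mulVec, smul_mulVec, h1] at h2
        linear_combination (norm := module) h2
      have honeSx : one ⬝ᵥ S.mulVec x = (1 / 2 : ℝ) * (xN - x0) := by
        rw [dotProduct_mulVec, ← mulVec_transpose, hS, neg_mulVec, hSone, neg_neg,
          smul_dotProduct, sub_dotProduct, heR, heL, single_dotProduct, single_dotProduct,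
          one_mul, one_mul, smul_eq_mul]
      have hq2 : (xN - x0) + x0 = 0 := by
        have h := congrArg (fun v => one ⬝ᵥ v) hMx
        simp only [dotProduct_add, dotProduct_zero, dotProduct_smul, smul_eq_mul] at h
        rw [hA, add_mulVec, smul_mulVec, dotProduct_add, dotProduct_smul,
          honeSx, hBx, dotProduct_sub, dotProduct_smul, dotProduct_smul,
          hdotL, hdotR] at h
        simp only [smul_eq_mul, hone] at h
        nlinarith [h]
      have hxN0 : xN = 0 := by linarith
      have hx00 : x0 = 0 := by nlinarith [hq1]
      -- now A x = 0, so x ∈ span {𝟙}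
      have hAx : A.mulVec x = 0 := by
        rw [hx00, zero_smul, add_zero] at hMx; exact hMx
      have hxmem : x ∈ LinearMap.ker A.mulVecLin := by
        simpa [LinearMap.mem_ker, mulVecLin_apply] using hAx
      rw [hker, Submodule.mem_span_singleton] at hxmem
      obtain ⟨c, hc⟩ := hxmem
      have hc0 : c = 0 := by
        have := congrFun hc 0
        simp only [Pi.smul_apply, smul_eq_mul, hone, mul_one] at this
        linarith [this, hx00]
      rw [← hc, hc0, zero_smul]
    intro x y hxy
    have : (A + (1 : ℝ) • E).mulVec (x - y) = 0 := by
      rw [mulVec_sub, hxy, sub_self]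
    have := hinj _ this
    exact sub_eq_zero.mp this
  · -- perturbed matrix invertible → nullspace consistency
    rintro ⟨ν, hν, hU⟩
    rw [hPertUnit ν] at hU
    have hMinj : Function.Injective (A + ν • E).mulVec :=
      mulVec_injective_iff_isUnit.mpr hU
    rw [hkerD]
    apply le_antisymm
    · intro x hx
      have hAx : A.mulVec x = 0 := by
        simpa [LinearMap.mem_ker, mulVecLin_apply] using hx
      have h1 : (A + ν • E).mulVec x = (ν * x 0) • eL := by
        rw [add_mulVec, hAx, zero_add, smul_mulVec, hEx, smul_smul]
      have h2 : (A + ν • E).mulVec (x 0 • one) = (ν * x 0) • eL := by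
        rw [mulVec_smul, add_mulVec, hAone, zero_add, smul_mulVec, hEx]
        simp only [hone, smul_smul]
        ring_nf
      have h3 : x = x 0 • one := hMinj (h1.trans h2.symm)
      exact Submodule.mem_span_singleton.mpr ⟨x 0, h3.symm⟩
    · rw [Submodule.span_le, Set.singleton_subset_iff]
      simpa [LinearMap.mem_ker, mulVecLin_apply] using hAone
end

section
/- Let D = P⁻¹(S + B/2) with P symmetric positive definite and S skew-symmetric. Then for any ν, the matrix P D̃ = S + B/2 + ν e_L e_Lᵀ has symmetric part (1/2)(e_R e_Rᵀ + (2ν − 1) e_L e_Lᵀ). In particular, if ν ≥ 1/2, the symmetric part of P D̃ is positive semidefinite, and hence every eigenvalue λ of D̃ satisfies Re(λ) ≥ 0. -/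
open Matrix

private lemma dot_vecMulVec {m : Type*} [Fintype m] (u v x y : m → ℝ) :
    x ⬝ᵥ (vecMulVec u v).mulVec y = (x ⬝ᵥ u) * (v ⬝ᵥ y) := by
  simp only [dotProduct, mulVec, vecMulVec_apply, Finset.mul_sum, Finset.sum_mul]
  rw [Finset.sum_comm]
  exact Finset.sum_congr rfl fun i _ => Finset.sum_congr rfl fun j _ => by ring

private lemma dot_map_re {m : Type*} [Fintype m] (Q : Matrix m m ℝ) (v : m → ℂ) :
    (star v ⬝ᵥ (Q.map (algebraMap ℝ ℂ)).mulVec v).re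
      = (fun i => (v i).re) ⬝ᵥ Q.mulVec (fun i => (v i).re)
        + (fun i => (v i).im) ⬝ᵥ Q.mulVec (fun i => (v i).im) := by
  simp only [dotProduct, mulVec, Matrix.map_apply, Finset.mul_sum, Complex.re_sum,
    Pi.star_apply, Complex.star_def]
  rw [← Finset.sum_add_distrib]
  refine Finset.sum_congr rfl fun i _ => ?_
  rw [← Finset.sum_add_distrib]
  refine Finset.sum_congr rfl fun j _ => ?_
  simp [Complex.mul_re, Complex.mul_im]

private lemma dot_map_im {m : Type*} [Fintype m] (Q : Matrix m m ℝ) (v : m → ℂ) :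
    (star v ⬝ᵥ (Q.map (algebraMap ℝ ℂ)).mulVec v).im
      = (fun i => (v i).re) ⬝ᵥ Q.mulVec (fun i => (v i).im)
        - (fun i => (v i).im) ⬝ᵥ Q.mulVec (fun i => (v i).re) := by
  simp only [dotProduct, mulVec, Matrix.map_apply, Finset.mul_sum, Complex.im_sum,
    Pi.star_apply, Complex.star_def]
  rw [← Finset.sum_sub_distrib]
  refine Finset.sum_congr rfl fun i _ => ?_
  rw [← Finset.sum_sub_distrib]
  refine Finset.sum_congr rfl fun j _ => ?_
  simp [Complex.mul_re, Complex.mul_im]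
  ring

private lemma dot_transpose {m : Type*} [Fintype m] (Q : Matrix m m ℝ) (a b : m → ℝ) :
    a ⬝ᵥ Qᵀ.mulVec b = b ⬝ᵥ Q.mulVec a := by
  simp only [dotProduct, mulVec, transpose_apply, Finset.mul_sum]
  rw [Finset.sum_comm]
  exact Finset.sum_congr rfl fun i _ => Finset.sum_congr rfl fun j _ => by ring

/-- For `P` SPD and `S` skew-symmetric, the matrix
`P D̃ = S + B/2 + ν e_L e_Lᵀ` has symmetric part `(1/2)(e_R e_Rᵀ + (2ν - 1) e_L e_Lᵀ)`.
If `ν ≥ 1/2` this symmetric part is positive semidefinite and every eigenvalue of `D̃`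
has nonnegative real part. -/
theorem stmt_14 (n : ℕ) (P S : Matrix (Fin (n + 1)) (Fin (n + 1)) ℝ)
    (hP : P.PosDef) (hPsymm : P.IsSymm) (hS : Sᵀ = -S) (ν : ℝ)
    (B : Matrix (Fin (n + 1)) (Fin (n + 1)) ℝ)
    (hB : B = vecMulVec (Pi.single (Fin.last n) 1) (Pi.single (Fin.last n) 1)
      - vecMulVec (Pi.single 0 1) (Pi.single 0 (1 : ℝ)))
    (M Dt : Matrix (Fin (n + 1)) (Fin (n + 1)) ℝ)
    (hM : M = S + (1 / 2 : ℝ) • B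
      + ν • vecMulVec (Pi.single 0 1) (Pi.single 0 (1 : ℝ)))
    (hDt : Dt = P⁻¹ * M) :
    (1 / 2 : ℝ) • (M + Mᵀ)
      = (1 / 2 : ℝ) • (vecMulVec (Pi.single (Fin.last n) 1) (Pi.single (Fin.last n) 1)
        + (2 * ν - 1) • vecMulVec (Pi.single 0 1) (Pi.single 0 (1 : ℝ))) ∧
    (1 / 2 ≤ ν →
      ((1 / 2 : ℝ) • (M + Mᵀ)).PosSemidef ∧
      ∀ μ ∈ spectrum ℂ (Dt.map (algebraMap ℝ ℂ)), 0 ≤ μ.re) := by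
  set u : Fin (n + 1) → ℝ := Pi.single (Fin.last n) 1 with hu
  set w : Fin (n + 1) → ℝ := Pi.single 0 1 with hw
  have hS' : ∀ i j, S j i = -(S i j) := fun i j => by
    have := congrFun (congrFun hS i) j; simpa using this
  have hsym : (1 / 2 : ℝ) • (M + Mᵀ)
      = (1 / 2 : ℝ) • (vecMulVec u u + (2 * ν - 1) • vecMulVec w w) := by
    subst hM hB
    ext i j
    simp [vecMulVec_apply, mul_comm, hS' i j]
    ring
  refine ⟨hsym, fun hν => ?_⟩
  -- positive semidefiniteness of the symmetric part
  have hpsd : ((1 / 2 : ℝ) • (M + Mᵀ)).PosSemidef := by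
    rw [hsym]
    refine posSemidef_iff_dotProduct_mulVec.mpr ⟨?_, ?_⟩
    · show _ᴴ = _
      ext i j
      simp [conjTranspose_apply, vecMulVec_apply]
      ring
    · intro x
      have : star x = x := by simp
      rw [this]
      rw [smul_mulVec, dotProduct_smul, add_mulVec, smul_mulVec,
        dotProduct_add, dotProduct_smul, dot_vecMulVec, dot_vecMulVec]
      have h1 : (0:ℝ) ≤ (x ⬝ᵥ u) * (u ⬝ᵥ x) := by
        rw [dotProduct_comm]; exact mul_self_nonneg _
      have h2 : (0:ℝ) ≤ (x ⬝ᵥ w) * (w ⬝ᵥ x) := by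
        rw [dotProduct_comm]; exact mul_self_nonneg _
      have h3 : (0:ℝ) ≤ 2 * ν - 1 := by linarith
      simp only [smul_eq_mul]
      positivity
  refine ⟨hpsd, fun μ hμ => ?_⟩
  -- extract an eigenvector
  rw [spectrum.mem_iff] at hμ
  rw [Matrix.isUnit_iff_isUnit_det, isUnit_iff_ne_zero, not_not] at hμ
  obtain ⟨v, hv0, hv⟩ := (Matrix.exists_mulVec_eq_zero_iff).mpr hμ
  have heig : (Dt.map (algebraMap ℝ ℂ)).mulVec v = μ • v := by
    rw [sub_mulVec] at hv
    have halg : (algebraMap ℂ (Matrix (Fin (n+1)) (Fin (n+1)) ℂ) μ).mulVec v = μ • v := by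
      rw [Algebra.algebraMap_eq_smul_one, smul_mulVec, one_mulVec]
    rw [halg] at hv
    linear_combination (norm := module) -hv
  -- P * Dt = M (complexified)
  have hPinv : P * P⁻¹ = 1 := mul_nonsing_inv P (Ne.isUnit hP.det_pos.ne')
  have hPDt : P * Dt = M := by rw [hDt, ← mul_assoc, hPinv, one_mul]
  have hPDtC : (P.map (algebraMap ℝ ℂ)) * (Dt.map (algebraMap ℝ ℂ)) = M.map (algebraMap ℝ ℂ) := by
    rw [← Matrix.map_mul, hPDt]
  have hMv : (M.map (algebraMap ℝ ℂ)).mulVec v = μ • (P.map (algebraMap ℝ ℂ)).mulVec v := by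
    rw [← hPDtC, ← mulVec_mulVec, heig, mulVec_smul]
  set x : Fin (n+1) → ℝ := fun i => (v i).re with hx
  set y : Fin (n+1) → ℝ := fun i => (v i).im with hy
  set c : ℂ := star v ⬝ᵥ (P.map (algebraMap ℝ ℂ)).mulVec v with hc
  have hq : star v ⬝ᵥ (M.map (algebraMap ℝ ℂ)).mulVec v = μ * c := by
    rw [hMv, dotProduct_smul, hc, smul_eq_mul]
  -- c is real and positive
  have hcim : c.im = 0 := by
    rw [hc, dot_map_im]
    have : x ⬝ᵥ P.mulVec y = y ⬝ᵥ P.mulVec x := by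
      conv_lhs => rw [← hPsymm]
      exact dot_transpose P x y
    rw [← hx, ← hy, this, sub_self]
  have hvR : x ≠ 0 ∨ y ≠ 0 := by
    by_contra h
    push_neg at h
    apply hv0
    funext i
    have h1 := congrFun h.1 i
    have h2 := congrFun h.2 i
    simp only [hx, hy, Pi.zero_apply] at h1 h2
    exact Complex.ext h1 h2
  have hcre : 0 < c.re := by
    rw [hc, dot_map_re, ← hx, ← hy]
    rcases hvR with h | h
    · have := hP.dotProduct_mulVec_pos h
      have h2 := hP.posSemidef.dotProduct_mulVec_nonneg y
      simp only [star_trivial] at this h2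
      linarith
    · have := hP.dotProduct_mulVec_pos h
      have h2 := hP.posSemidef.dotProduct_mulVec_nonneg x
      simp only [star_trivial] at this h2
      linarith
  -- real part of star v ⬝ᵥ M v is nonnegative
  have hsymdot : ∀ z : Fin (n+1) → ℝ, 0 ≤ z ⬝ᵥ M.mulVec z := by
    intro z
    have := hpsd.dotProduct_mulVec_nonneg z
    simp only [star_trivial, smul_mulVec, dotProduct_smul, add_mulVec,
      dotProduct_add, smul_eq_mul] at this
    have hT : z ⬝ᵥ Mᵀ.mulVec z = z ⬝ᵥ M.mulVec z := dot_transpose M z z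
    rw [hT] at this
    linarith
  have hqre : 0 ≤ (star v ⬝ᵥ (M.map (algebraMap ℝ ℂ)).mulVec v).re := by
    rw [dot_map_re, ← hx, ← hy]
    exact add_nonneg (hsymdot x) (hsymdot y)
  rw [hq, Complex.mul_re, hcim, mul_zero, sub_zero] at hqre
  rw [mul_comm] at hqre
  exact nonneg_of_mul_nonneg_right hqre hcre
end
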